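/- Let H be a real Hilbert space and let f : H → ℝ be Fréchet differentiable and L-smooth of order ℓ > 1 (for some L > 0). Let x ∈ H, let V ⊆ H be a closed linear subspace, and let g be the orthogonal projection of ∇f(x) onto V. Suppose there exist v ∈ V with v ≠ 0 and φ ≤ 0 such that ⟨∇f(x), v⟩ ≤ φ. Then inf_{γ ≥ 0} f(x − γg) ≤ f(x) − (−φ)^{ℓ̄} / (ℓ̄ · L^{ℓ̄−1} · ‖v‖^{ℓ̄}), where ℓ̄ := ℓ/(ℓ−1). -/

import Mathlib

open RealInnerProductSpace

/-- If `f` is `L`-smooth of order `ℓ > 1`, `g` is the orthogonal projection of `∇f x` onto a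
closed subspace `V`, and there is `v ∈ V`, `v ≠ 0`, and `φ ≤ 0` with `⟪∇f x, v⟫ ≤ φ`, then
`inf_{γ ≥ 0} f (x - γ g) ≤ f x - (-φ)^ℓ̄ / (ℓ̄ L^(ℓ̄-1) ‖v‖^ℓ̄)` where `ℓ̄ = ℓ/(ℓ-1)`. -/
theorem stmt_9
    {H : Type*} [NormedAddCommGroup H] [InnerProductSpace ℝ H] [CompleteSpace H]
    (f : H → ℝ) (f' : H → H) (hdiff : ∀ x, HasGradientAt f (f' x) x)
    (L ℓ : ℝ) (hL : 0 < L) (hℓ : 1 < ℓ)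
    (hsmooth : ∀ x y : H, f y - f x - ⟪f' x, y - x⟫ ≤ L / ℓ * ‖y - x‖ ^ ℓ)
    (x : H) (V : Submodule ℝ H) (hV : IsClosed (V : Set H))
    (g : H) (hgV : g ∈ V) (hgproj : ∀ w ∈ V, ⟪g, w⟫ = ⟪f' x, w⟫)
    (v : H) (hvV : v ∈ V) (hv : v ≠ 0)
    (φ : ℝ) (hφ : φ ≤ 0) (hvφ : ⟪f' x, v⟫ ≤ φ)
    (ℓb : ℝ) (hℓb : ℓb = ℓ / (ℓ - 1)) :
    ∃ γ : ℝ, 0 ≤ γ ∧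
      f (x - γ • g) ≤ f x - (-φ) ^ ℓb / (ℓb * L ^ (ℓb - 1) * ‖v‖ ^ ℓb) := by
  have hℓ1 : (0:ℝ) < ℓ - 1 := by linarith
  have hℓb1 : 1 < ℓb := by rw [hℓb, lt_div_iff₀ hℓ1]; linarith
  have hℓb0 : 0 < ℓb := by linarith
  have hgg : ⟪f' x, g⟫ = ‖g‖ ^ 2 := by
    rw [← hgproj g hgV, real_inner_self_eq_norm_sq]
  have hgv : ⟪g, v⟫ ≤ φ := by rw [hgproj v hvV]; exact hvφ
  by_cases hg : g = 0
  · have h0 : φ = 0 := le_antisymm hφ (by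
      have : ⟪g, v⟫ = 0 := by rw [hg, inner_zero_left]
      linarith)
    refine ⟨0, le_refl _, ?_⟩
    have : (-φ : ℝ) ^ ℓb = 0 := by
      rw [h0, neg_zero, Real.zero_rpow (by linarith : ℓb ≠ 0)]
    rw [this, zero_smul, sub_zero]
    simp
  · have hn : 0 < ‖g‖ := norm_pos_iff.mpr hg
    set n := ‖g‖ with hndef
    set γ : ℝ := n ^ (ℓb - 2) / L ^ (ℓb - 1) with hγdef
    have hγ : 0 < γ := div_pos (Real.rpow_pos_of_pos hn _) (Real.rpow_pos_of_pos hL _)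
    refine ⟨γ, hγ.le, ?_⟩
    have h1 := hsmooth x (x - γ • g)
    have hsub : x - γ • g - x = -(γ • g) := by abel
    rw [hsub] at h1
    rw [inner_neg_right, inner_smul_right, hgg, norm_neg, norm_smul,
      Real.norm_eq_abs, abs_of_pos hγ] at h1
    -- h1 : f (x - γ•g) - f x - -(γ * n^2) ≤ L/ℓ * (γ * n)^ℓ
    have key : -(γ * n ^ 2) + L / ℓ * (γ * n) ^ ℓ = -(n ^ ℓb / (ℓb * L ^ (ℓb - 1))) := by
      have e1 : (ℓb - 1) * ℓ = ℓb := by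
        rw [hℓb]; field_simp; ring
      have e2 : γ * n = n ^ (ℓb - 1) / L ^ (ℓb - 1) := by
        rw [hγdef, div_mul_eq_mul_div]
        congr 1
        nth_rewrite 2 [← Real.rpow_one n]
        rw [← Real.rpow_add hn]
        congr 1; ring
      have e3 : (γ * n) ^ ℓ = n ^ ℓb / L ^ ℓb := by
        rw [e2, Real.div_rpow (Real.rpow_pos_of_pos hn _).le (Real.rpow_pos_of_pos hL _).le,
          ← Real.rpow_mul hn.le, ← Real.rpow_mul hL.le, e1]
      have e4 : γ * n ^ 2 = n ^ ℓb / L ^ (ℓb - 1) := by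
        rw [hγdef, div_mul_eq_mul_div, ← Real.rpow_natCast n 2, ← Real.rpow_add hn]
        norm_num
      rw [e3, e4]
      have hLb : (0:ℝ) < L ^ ℓb := Real.rpow_pos_of_pos hL _
      have hLb1 : (0:ℝ) < L ^ (ℓb - 1) := Real.rpow_pos_of_pos hL _
      have e5 : L ^ ℓb = L ^ (ℓb - 1) * L := by
        rw [show L ^ (ℓb-1) * L = L ^ (ℓb-1) * L ^ (1:ℝ) by rw [Real.rpow_one],
          ← Real.rpow_add hL]
        congr 1; ring
      rw [e5]
      have hne : n ^ ℓb ≠ 0 := (Real.rpow_pos_of_pos hn _).ne'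
      field_simp
      rw [hℓb]
      field_simp
      ring
    -- so f (x - γ•g) ≤ f x - n^ℓb / (ℓb * L^(ℓb-1))
    have h2 : f (x - γ • g) ≤ f x - n ^ ℓb / (ℓb * L ^ (ℓb - 1)) := by
      have := h1
      nlinarith [key]
    refine h2.trans ?_
    have hC : (0:ℝ) < ℓb * L ^ (ℓb - 1) := mul_pos hℓb0 (Real.rpow_pos_of_pos hL _)
    have hvn : (0:ℝ) < ‖v‖ := norm_pos_iff.mpr hv
    -- (-φ) ≤ n * ‖v‖
    have hcs : -φ ≤ n * ‖v‖ := by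
      have := abs_real_inner_le_norm g v
      have h3 : -(n * ‖v‖) ≤ ⟪g, v⟫ := by
        have := neg_abs_le (⟪g, v⟫ : ℝ)
        nlinarith [abs_real_inner_le_norm g v]
      linarith
    have hrp : (-φ) ^ ℓb ≤ (n * ‖v‖) ^ ℓb :=
      Real.rpow_le_rpow (by linarith) hcs hℓb0.le
    rw [Real.mul_rpow hn.le hvn.le] at hrp
    have hvb : (0:ℝ) < ‖v‖ ^ ℓb := Real.rpow_pos_of_pos hvn _
    have : (-φ) ^ ℓb / (ℓb * L ^ (ℓb - 1) * ‖v‖ ^ ℓb) ≤ n ^ ℓb / (ℓb * L ^ (ℓb - 1)) := by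
      rw [div_le_div_iff₀ (by positivity) hC]
      calc (-φ) ^ ℓb * (ℓb * L ^ (ℓb - 1)) ≤ n ^ ℓb * ‖v‖ ^ ℓb * (ℓb * L ^ (ℓb - 1)) := by
            nlinarith
        _ = n ^ ℓb * (ℓb * L ^ (ℓb - 1) * ‖v‖ ^ ℓb) := by ring
    linarith
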